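/- Let X ⊆ ℝⁿ be a nonempty compact convex set. Then the epigraph {(x, t) ∈ ℝⁿ × ℝ : x ∈ X, −‖x‖₁ ≤ t} of the reverse ℓ₁-norm function restricted to X is MICP-representable. -/
import Mathlib


/-- A set `S ⊆ E` (think `E = ℝⁿ`) is mixed-integer convex programming representable
(MICP-R) if there exist nonnegative integers `p`, `d` and a closed convex set
`M ⊆ E × ℝᵖ × ℝᵈ` such that `x ∈ S` iff there are `y ∈ ℝᵖ` and `z ∈ ℝᵈ` with all
coordinates of `z` integral and `(x, y, z) ∈ M`. -/
def IsMICPR {E : Type*} [AddCommGroup E] [Module ℝ E] [TopologicalSpace E]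
    (S : Set E) : Prop :=
  ∃ (p d : ℕ) (M : Set (E × (Fin p → ℝ) × (Fin d → ℝ))),
    IsClosed M ∧ Convex ℝ M ∧
      ∀ x : E, x ∈ S ↔ ∃ (y : Fin p → ℝ) (z : Fin d → ℝ),
        (∀ i, ∃ k : ℤ, z i = (k : ℝ)) ∧ (x, y, z) ∈ M

/-- For a nonempty compact convex `X ⊆ ℝⁿ`, the epigraph
`{(x, t) : x ∈ X, −‖x‖₁ ≤ t}` of the reverse `ℓ₁`-norm function restricted to `X`
is MICP-representable. -/
theorem epigraph_neg_l1_micpr {n : ℕ} (X : Set (Fin n → ℝ)) (hne : X.Nonempty)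
    (hcomp : IsCompact X) (hconv : Convex ℝ X) :
    IsMICPR {xt : (Fin n → ℝ) × ℝ | xt.1 ∈ X ∧ -(∑ i, |xt.1 i|) ≤ xt.2} := by
  unfold IsMICPR
  obtain ⟨C, hC⟩ := hcomp.isBounded.exists_norm_le
  set R : ℝ := max C 0 + 1 with hRdef
  have hR : 0 < R := by positivity
  have hRx : ∀ x ∈ X, ∀ i, |x i| ≤ R := by
    intro x hx i
    calc |x i| ≤ ‖x‖ := by simpa using norm_le_pi_norm x i
    _ ≤ C := hC x hx
    _ ≤ R := by simp only [hRdef]; nlinarith [le_max_left C 0]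
  refine ⟨n, n, {w : ((Fin n → ℝ) × ℝ) × (Fin n → ℝ) × (Fin n → ℝ) |
      w.1.1 ∈ X ∧ (∀ i, 0 ≤ w.2.1 i ∧ w.1.1 i ≤ w.2.1 i ∧ w.2.1 i ≤ R * w.2.2 i ∧
        w.2.1 i - w.1.1 i ≤ R * (1 - w.2.2 i)) ∧
      -(∑ i, (2 * w.2.1 i - w.1.1 i)) ≤ w.1.2}, ?_, ?_, ?_⟩
  · -- closed
    have h1 : IsClosed {w : ((Fin n → ℝ) × ℝ) × (Fin n → ℝ) × (Fin n → ℝ) | w.1.1 ∈ X} :=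
      hcomp.isClosed.preimage (by fun_prop)
    have h2 : IsClosed {w : ((Fin n → ℝ) × ℝ) × (Fin n → ℝ) × (Fin n → ℝ) |
        ∀ i, 0 ≤ w.2.1 i ∧ w.1.1 i ≤ w.2.1 i ∧ w.2.1 i ≤ R * w.2.2 i ∧
          w.2.1 i - w.1.1 i ≤ R * (1 - w.2.2 i)} := by
      have : {w : ((Fin n → ℝ) × ℝ) × (Fin n → ℝ) × (Fin n → ℝ) |
          ∀ i, 0 ≤ w.2.1 i ∧ w.1.1 i ≤ w.2.1 i ∧ w.2.1 i ≤ R * w.2.2 i ∧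
            w.2.1 i - w.1.1 i ≤ R * (1 - w.2.2 i)} =
          ⋂ i, ({w | 0 ≤ w.2.1 i} ∩ {w | w.1.1 i ≤ w.2.1 i} ∩ {w | w.2.1 i ≤ R * w.2.2 i} ∩
            {w | w.2.1 i - w.1.1 i ≤ R * (1 - w.2.2 i)}) := by
        ext w; simp [Set.mem_iInter, and_assoc]
      rw [this]
      refine isClosed_iInter fun i => ((((isClosed_le (by fun_prop) (by fun_prop)).inter
        (isClosed_le (by fun_prop) (by fun_prop))).inter
        (isClosed_le (by fun_prop) (by fun_prop))).inter
        (isClosed_le (by fun_prop) (by fun_prop)))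
    have h3 : IsClosed {w : ((Fin n → ℝ) × ℝ) × (Fin n → ℝ) × (Fin n → ℝ) |
        -(∑ i, (2 * w.2.1 i - w.1.1 i)) ≤ w.1.2} :=
      isClosed_le (by fun_prop) (by fun_prop)
    have heq : {w : ((Fin n → ℝ) × ℝ) × (Fin n → ℝ) × (Fin n → ℝ) |
        w.1.1 ∈ X ∧ (∀ i, 0 ≤ w.2.1 i ∧ w.1.1 i ≤ w.2.1 i ∧ w.2.1 i ≤ R * w.2.2 i ∧
          w.2.1 i - w.1.1 i ≤ R * (1 - w.2.2 i)) ∧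
        -(∑ i, (2 * w.2.1 i - w.1.1 i)) ≤ w.1.2} =
        ({w | w.1.1 ∈ X} ∩ {w | ∀ i, 0 ≤ w.2.1 i ∧ w.1.1 i ≤ w.2.1 i ∧ w.2.1 i ≤ R * w.2.2 i ∧
          w.2.1 i - w.1.1 i ≤ R * (1 - w.2.2 i)}) ∩
        {w | -(∑ i, (2 * w.2.1 i - w.1.1 i)) ≤ w.1.2} := by
      ext w; simp [Set.mem_inter_iff, and_assoc]
    rw [heq]
    exact (h1.inter h2).inter h3
  · -- convex
    rintro w1 hw1 w2 hw2 a b ha hb hab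
    obtain ⟨hX1, hc1, ht1⟩ := hw1
    obtain ⟨hX2, hc2, ht2⟩ := hw2
    refine ⟨hconv hX1 hX2 ha hb hab, fun i => ?_, ?_⟩
    · obtain ⟨p0, p1, p2, p3⟩ := hc1 i
      obtain ⟨q0, q1, q2, q3⟩ := hc2 i
      simp only [Prod.fst_add, Prod.snd_add, Prod.smul_fst, Prod.smul_snd, Pi.add_apply,
        Pi.smul_apply, smul_eq_mul]
      refine ⟨by nlinarith, by nlinarith, ?_, ?_⟩
      · nlinarith [mul_le_mul_of_nonneg_left p2 ha, mul_le_mul_of_nonneg_left q2 hb]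
      · nlinarith [mul_le_mul_of_nonneg_left p3 ha, mul_le_mul_of_nonneg_left q3 hb]
    · have hsum : (∑ i, (2 * ((a • w1 + b • w2).2.1 i) - (a • w1 + b • w2).1.1 i)) =
          a * (∑ i, (2 * w1.2.1 i - w1.1.1 i)) + b * (∑ i, (2 * w2.2.1 i - w2.1.1 i)) := by
        simp only [Prod.fst_add, Prod.snd_add, Prod.smul_fst, Prod.smul_snd, Pi.add_apply,
          Pi.smul_apply, smul_eq_mul, Finset.mul_sum, ← Finset.sum_add_distrib]
        exact Finset.sum_congr rfl fun i _ => by ring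
      show -(∑ i, (2 * ((a • w1 + b • w2).2.1 i) - (a • w1 + b • w2).1.1 i)) ≤
        (a • w1 + b • w2).1.2
      rw [hsum]
      have h12 : (a • w1 + b • w2).1.2 = a * w1.1.2 + b * w2.1.2 := rfl
      rw [h12]
      nlinarith [mul_le_mul_of_nonneg_left ht1 ha, mul_le_mul_of_nonneg_left ht2 hb]
  · intro x
    constructor
    · rintro ⟨hx, ht⟩
      refine ⟨fun i => max (x.1 i) 0, fun i => if 0 ≤ x.1 i then 1 else 0, fun i => ?_,
        hx, fun i => ?_, ?_⟩
      · by_cases h : 0 ≤ x.1 i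
        · exact ⟨1, by simp [h]⟩
        · exact ⟨0, by simp [h]⟩
      · have hb := hRx x.1 hx i
        rw [abs_le] at hb
        show 0 ≤ max (x.1 i) 0 ∧ x.1 i ≤ max (x.1 i) 0 ∧
          max (x.1 i) 0 ≤ R * (if 0 ≤ x.1 i then 1 else 0) ∧
          max (x.1 i) 0 - x.1 i ≤ R * (1 - if 0 ≤ x.1 i then 1 else 0)
        by_cases h : 0 ≤ x.1 i
        · rw [if_pos h, max_eq_left h]
          refine ⟨h, le_refl _, by nlinarith, by nlinarith⟩
        · push_neg at h
          rw [if_neg (not_le.mpr h), max_eq_right h.le]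
          refine ⟨le_refl _, h.le, by nlinarith, by nlinarith⟩
      · have hsum : (∑ i, (2 * max (x.1 i) 0 - x.1 i)) = ∑ i, |x.1 i| := by
          refine Finset.sum_congr rfl fun i _ => ?_
          rcases le_or_gt 0 (x.1 i) with h | h
          · rw [max_eq_left h, abs_of_nonneg h]; ring
          · rw [max_eq_right h.le, abs_of_neg h]; ring
        simpa [hsum] using ht
    · rintro ⟨y, z, hz, hX, hc, ht⟩
      refine ⟨hX, ?_⟩
      have key : ∀ i, 2 * y i - x.1 i = |x.1 i| := by
        intro i
        obtain ⟨k, hk⟩ := hz i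
        obtain ⟨h0', h1', h2', h3'⟩ := hc i
        have h0 : 0 ≤ y i := h0'
        have h1 : x.1 i ≤ y i := h1'
        have h2 : y i ≤ R * z i := h2'
        have h3 : y i - x.1 i ≤ R * (1 - z i) := h3'
        have hz0 : 0 ≤ z i := by nlinarith
        have hz1 : z i ≤ 1 := by nlinarith
        have hk01 : k = 0 ∨ k = 1 := by
          rw [hk] at hz0 hz1
          have : (0:ℤ) ≤ k := by exact_mod_cast hz0
          have : k ≤ 1 := by exact_mod_cast hz1
          omega
        rcases hk01 with h | h
        · have hzi : z i = 0 := by rw [hk, h]; norm_num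
          rw [hzi] at h2
          have hy : y i = 0 := le_antisymm (by linarith) h0
          have hxn : x.1 i ≤ 0 := by linarith
          rw [abs_of_nonpos hxn, hy]; ring
        · have hzi : z i = 1 := by rw [hk, h]; norm_num
          rw [hzi] at h3
          have hy : y i = x.1 i := le_antisymm (by linarith) h1
          have hxp : 0 ≤ x.1 i := by rw [← hy]; exact h0
          rw [abs_of_nonneg hxp, hy]; ring
      have : (∑ i, (2 * y i - x.1 i)) = ∑ i, |x.1 i| :=
        Finset.sum_congr rfl fun i _ => key i
      rw [← this]
      exact ht
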